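/- arXiv:1107.3852 — 4 statements merged into one kernel-verified Lean document; each statement's English description precedes it below -/
import Mathlib

section
/- For a positive integer j, the sequence C formally satisfies the recursion R(n) = R(n - R(n-j)) + R(n - j - R(n-j)): for every integer n, C(n) = C(n - C(n-j)) + C(n - j - C(n-j)). -/
def C (j : ℕ) (n : ℤ) : ℤ := ∑ i ∈ Finset.range j, ⌈((n : ℚ) - i) / (2 * j)⌉

lemma term_eq (j : ℕ) (n : ℤ) (i : ℕ) :
    ⌈((n : ℚ) - i) / (2 * j)⌉ = -(((i : ℤ) - n) / (2 * j : ℤ)) := by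
  have h1 : ((n : ℚ) - i) / (2 * j) = -(((i - n : ℤ) : ℚ) / ((2 * j : ℕ) : ℚ)) := by
    push_cast; ring
  rw [h1, Int.ceil_neg, Rat.floor_intCast_div_natCast]
  push_cast; ring_nf

lemma C_eq (j : ℕ) (n : ℤ) :
    C j n = ∑ i ∈ Finset.range j, -(((i : ℤ) - n) / (2 * j : ℤ)) := by
  unfold C
  exact Finset.sum_congr rfl fun i _ => term_eq j n i

lemma indicator_eq (m : ℕ) (hm : 0 < m) (r : ℤ) (hr0 : 0 ≤ r) (hrm : r < m) (i : ℕ)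
    (hi : i < m) : ((i : ℤ) - r) / (m : ℤ) = if (i : ℤ) < r then -1 else 0 := by
  split_ifs with h
  · have key : ((i : ℤ) - r + (m : ℤ) * 1) / (m : ℤ) = ((i : ℤ) - r) / (m : ℤ) + 1 :=
      Int.add_mul_ediv_left _ 1 (by exact_mod_cast hm.ne')
    have h0 : ((i : ℤ) - r + (m : ℤ) * 1) / (m : ℤ) = 0 :=
      Int.ediv_eq_zero_of_lt (by omega) (by omega)
    omega
  · exact Int.ediv_eq_zero_of_lt (by omega) (by omega)

lemma hermite (m : ℕ) (hm : 0 < m) (n : ℤ) :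
    ∑ i ∈ Finset.range m, (((i : ℤ) - n) / (m : ℤ)) = -n := by
  set q : ℤ := n / (m : ℤ) with hq
  set r : ℤ := n % (m : ℤ) with hr
  have hm' : (0 : ℤ) < (m : ℤ) := by exact_mod_cast hm
  have hr0 : 0 ≤ r := Int.emod_nonneg n hm'.ne'
  have hrm : r < m := Int.emod_lt_of_pos n hm'
  have hn : n = (m : ℤ) * q + r := (Int.mul_ediv_add_emod n m).symm
  have step : ∀ i ∈ Finset.range m,
      (((i : ℤ) - n) / (m : ℤ)) = (if (i : ℤ) < r then (-1 : ℤ) else 0) + (-q) := by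
    intro i hi
    have : (i : ℤ) - n = ((i : ℤ) - r) + (m : ℤ) * (-q) := by rw [hn]; ring
    rw [this, Int.add_mul_ediv_left _ _ hm'.ne',
      indicator_eq m hm r hr0 hrm i (Finset.mem_range.mp hi)]
  rw [Finset.sum_congr rfl step, Finset.sum_add_distrib, Finset.sum_const,
    Finset.card_range]
  have hsum : ∑ i ∈ Finset.range m, (if (i : ℤ) < r then (-1 : ℤ) else 0) = -r := by
    set k : ℕ := r.toNat with hk
    have hkm : k ≤ m := by omega
    have hcond : ∀ i : ℕ, ((i : ℤ) < r) = (i < k) := by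
      intro i; simp only [eq_iff_iff]; omega
    simp only [hcond]
    have hmk : m = k + (m - k) := by omega
    rw [hmk, Finset.sum_range_add]
    have h1 : ∑ i ∈ Finset.range k, (if i < k then (-1 : ℤ) else 0) = -k := by
      rw [Finset.sum_congr rfl (fun i hi => if_pos (Finset.mem_range.mp hi))]
      simp
    have h2 : ∑ i ∈ Finset.range (m - k), (if k + i < k then (-1 : ℤ) else 0) = 0 := by
      rw [Finset.sum_congr rfl (fun i _ => if_neg (by omega))]
      simp
    rw [h1, h2]; omega
  rw [hsum]
  simp only [nsmul_eq_mul]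
  rw [hn]
  ring

lemma key (j : ℕ) (hj : 0 < j) (n : ℤ) : C j n + C j (n - j) = n := by
  rw [C_eq, C_eq]
  have h2 : ∑ i ∈ Finset.range j, -(((i : ℤ) - (n - j)) / (2 * j : ℤ))
      = ∑ i ∈ Finset.range j, -((((j + i : ℕ) : ℤ) - n) / (2 * j : ℤ)) := by
    refine Finset.sum_congr rfl fun i _ => ?_
    congr 2
    push_cast; ring
  rw [h2, ← Finset.sum_range_add (fun i => -(((i : ℤ) - n) / (2 * j : ℤ))) j j]
  have := hermite (j + j) (by omega) n
  have hcast : ((j + j : ℕ) : ℤ) = 2 * (j : ℤ) := by push_cast; ring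
  rw [hcast] at this
  rw [Finset.sum_neg_distrib, this]
  ring

theorem stmt6 (j : ℕ) (hj : 0 < j) (n : ℤ) :
    C j n = C j (n - C j (n - j)) + C j (n - j - C j (n - j)) := by
  have h1 := key j hj n
  have h2 := key j hj (n - C j (n - j))
  have h3 : n - C j (n - j) - j = n - j - C j (n - j) := by ring
  rw [h3] at h2
  omega
end

section
/- Let a : \mathbb{Z} \to \mathbb{Z} be a sequence. If there exist an integer c, a natural number k, and rationals q_1,...,q_k, r_1,...,r_k such that a(n) = c + \sum_{i=1}^k \lceil q_i n + r_i \rceil for all n, then the difference sequence d(n) = a(n+1) - a(n) is periodic, i.e., there exists a positive integer p with d(n+p) = d(n) for all n. -/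
theorem stmt8 (a : ℤ → ℤ)
    (h : ∃ (c : ℤ) (k : ℕ) (q r : Fin k → ℚ),
      ∀ n : ℤ, a n = c + ∑ i, ⌈q i * n + r i⌉) :
    ∃ p : ℕ, 0 < p ∧ ∀ n : ℤ, a (n + 1 + p) - a (n + p) = a (n + 1) - a n := by
  obtain ⟨c, k, q, r, hq⟩ := h
  set p : ℕ := ∏ i, (q i).den with hp
  have hp0 : 0 < p := Finset.prod_pos (fun i _ => (q i).pos)
  have key : ∀ i : Fin k, ∃ z : ℤ, (z : ℚ) = q i * p := by
    intro i
    obtain ⟨m, hm⟩ := Finset.dvd_prod_of_mem (fun i => (q i).den) (Finset.mem_univ i)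
    refine ⟨(q i).num * m, ?_⟩
    rw [hp, hm]
    push_cast
    rw [← mul_assoc, Rat.mul_den_eq_num]
  choose z hz using key
  have shift : ∀ n : ℤ, a (n + p) = a n + ∑ i, z i := by
    intro n
    rw [hq, hq]
    have h1 : ∀ i : Fin k, ⌈q i * ((n : ℚ) + (p : ℚ)) + r i⌉ = ⌈q i * n + r i⌉ + z i := by
      intro i
      have h2 : q i * ((n : ℚ) + p) + r i = (q i * n + r i) + (z i : ℚ) := by
        rw [hz]; ring
      rw [h2, Int.ceil_add_intCast]
    push_cast
    rw [Finset.sum_congr rfl (fun i _ => h1 i), Finset.sum_add_distrib]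
    ring
  exact ⟨p, hp0, fun n => by rw [show n + 1 + (p:ℤ) = (n+1) + p by ring, shift, shift]; ring⟩
end

section
/- Let j be a positive integer and let s_1, a_1, s_2, a_2, c be integers. Define h(n) = C(n - s_1 - C(n - a_1)) + C(n - s_2 - C(n - a_2)) - C(n). Then for all integers n, h(n) = C(n - (s_1 + cj) - C(n - (a_1 + 2cj))) + C(n - s_2 - C(n - a_2)) - C(n). (Transformation (a) preserves the difference function.) -/
lemma C_shift (j : ℕ) (hj : 0 < j) (m c : ℤ) :
    C j (m - 2 * c * j) = C j m - c * j := by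
  have hj' : (2 * j : ℚ) ≠ 0 := by positivity
  unfold C
  have : ∀ i ∈ Finset.range j,
      ⌈(((m - 2 * c * j : ℤ) : ℚ) - i) / (2 * j)⌉ = ⌈((m : ℚ) - i) / (2 * j)⌉ - c := by
    intro i _
    rw [show (((m - 2 * c * j : ℤ) : ℚ) - i) / (2 * j) = ((m : ℚ) - i) / (2 * j) - c by
      push_cast; field_simp; ring]
    exact_mod_cast Int.ceil_sub_intCast _ c
  rw [Finset.sum_congr rfl this, Finset.sum_sub_distrib]
  simp [mul_comm]

theorem stmt11 (j : ℕ) (hj : 0 < j) (s₁ a₁ s₂ a₂ c : ℤ) (n : ℤ) :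
    C j (n - s₁ - C j (n - a₁)) + C j (n - s₂ - C j (n - a₂)) - C j n =
      C j (n - (s₁ + c * j) - C j (n - (a₁ + 2 * c * j))) +
        C j (n - s₂ - C j (n - a₂)) - C j n := by
  have h1 : n - (a₁ + 2 * c * j) = (n - a₁) - 2 * c * j := by ring
  rw [h1, C_shift j hj]
  ring_nf
end

section
/- Let j be a positive integer and s_1, a_1, s_2, a_2, d be integers. Define h(n) = C(n - s_1 - C(n - a_1)) + C(n - s_2 - C(n - a_2)) - C(n). Then h(n + 4jd) = h(n) for all integers n. -/
lemma C_shift_s13 (j : ℕ) (hj : 0 < j) (n k : ℤ) : C j (n + 2 * j * k) = C j n + j * k := by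
  unfold C
  have hjq : (j : ℚ) ≠ 0 := by exact_mod_cast hj.ne'
  have : ∀ i ∈ Finset.range j,
      ⌈(((n + 2 * j * k : ℤ) : ℚ) - i) / (2 * j)⌉ = ⌈((n : ℚ) - i) / (2 * j)⌉ + k := by
    intro i _
    have : (((n + 2 * j * k : ℤ) : ℚ) - i) / (2 * j) = ((n : ℚ) - i) / (2 * j) + (k : ℚ) := by
      push_cast
      field_simp
      ring
    rw [this]
    exact_mod_cast Int.ceil_add_intCast _ k
  rw [Finset.sum_congr rfl this, Finset.sum_add_distrib, Finset.sum_const, Finset.card_range]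
  push_cast
  ring

theorem stmt13 (j : ℕ) (hj : 0 < j) (s₁ a₁ s₂ a₂ d : ℤ) (n : ℤ) :
    C j (n + 4 * j * d - s₁ - C j (n + 4 * j * d - a₁)) +
        C j (n + 4 * j * d - s₂ - C j (n + 4 * j * d - a₂)) - C j (n + 4 * j * d) =
      C j (n - s₁ - C j (n - a₁)) + C j (n - s₂ - C j (n - a₂)) - C j n := by
  have h1 : ∀ a : ℤ, C j (n + 4 * j * d - a) = C j (n - a) + j * (2 * d) := by
    intro a
    have := C_shift_s13 j hj (n - a) (2 * d)
    rw [← this]; ring_nf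
  have h2 : ∀ s a : ℤ, C j (n + 4 * j * d - s - C j (n + 4 * j * d - a))
      = C j (n - s - C j (n - a)) + j * d := by
    intro s a
    rw [h1 a]
    have := C_shift_s13 j hj (n - s - C j (n - a)) d
    rw [← this]; ring_nf
  rw [h2 s₁ a₁, h2 s₂ a₂, show n + 4 * j * d = n + 2 * j * (2 * d) by ring,
    C_shift_s13 j hj n (2 * d)]
  ring
end
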